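/- Let ξ be a nonnegative real random variable with E[ξ^a] < ∞ for some a > 1 and E[ξ] > 0. Then for every x > 0, E[(ξ/(x+ξ))^a] / (E[ξ/(x+ξ)])^a ≤ E[ξ^a] / (E[ξ])^a. -/

import Mathlib

open MeasureTheory

lemma aux_rpow {t a : ℝ} (ht : 0 ≤ t) (ha : 1 < a) : t * t ^ (a-1) = t ^ a := by
  rcases eq_or_lt_of_le ht with h | h
  · rw [← h, Real.zero_rpow (by linarith), Real.zero_rpow (by linarith), mul_zero]
  · nth_rewrite 1 [← Real.rpow_one t]
    rw [← Real.rpow_add h]; ring_nf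

lemma aux_mono {x t s : ℝ} (hx : 0 < x) (ht : 0 ≤ t) (hts : t ≤ s) :
    t / (x + t) ≤ s / (x + s) := by
  rw [div_le_div_iff₀ (by linarith) (by linarith)]
  nlinarith

lemma aux_pt {x t s a : ℝ} (hx : 0 < x) (ht : 0 ≤ t) (hs : 0 ≤ s) (ha : 1 < a) :
    0 ≤ ((t/(x+t))^(a-1) * t) * (s/(x+s)) + (t/(x+t)) * ((s/(x+s))^(a-1) * s)
        - (t/(x+t))^a * s - (s/(x+s))^a * t := by
  set u := t / (x+t) with hu_def
  set v := s / (x+s) with hv_def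
  have hxt : (0:ℝ) < x + t := by linarith
  have hxs : (0:ℝ) < x + s := by linarith
  have hu : u * (x + t) = t := div_mul_cancel₀ _ (ne_of_gt hxt)
  have hv : v * (x + s) = s := div_mul_cancel₀ _ (ne_of_gt hxs)
  have hu0 : 0 ≤ u := div_nonneg ht hxt.le
  have hv0 : 0 ≤ v := div_nonneg hs hxs.le
  have hua : u ^ a = u * u ^ (a-1) := (aux_rpow hu0 ha).symm
  have hva : v ^ a = v * v ^ (a-1) := (aux_rpow hv0 ha).symm
  clear_value u v
  have key : (u^(a-1) * t) * v + u * (v^(a-1) * s) - u^a * s - v^a * t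
      = u * v * (u^(a-1) - v^(a-1)) * (t - s) := by
    rw [hua, hva]
    linear_combination (-(u^(a-1) - v^(a-1)) * v) * hu + ((u^(a-1) - v^(a-1)) * u) * hv
  rw [key]
  rcases le_total t s with h | h
  · have h1 : u ≤ v := by rw [hu_def, hv_def]; exact aux_mono hx ht h
    have h2 : u^(a-1) ≤ v^(a-1) := Real.rpow_le_rpow hu0 h1 (by linarith)
    nlinarith [mul_nonneg hu0 hv0, mul_nonneg (sub_nonneg.2 h2) (sub_nonneg.2 h)]
  · have h1 : v ≤ u := by rw [hu_def, hv_def]; exact aux_mono hx hs h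
    have h2 : v^(a-1) ≤ u^(a-1) := Real.rpow_le_rpow hv0 h1 (by linarith)
    nlinarith [mul_nonneg hu0 hv0, mul_nonneg (sub_nonneg.2 h2) (sub_nonneg.2 h)]

theorem stmt0 {Ω : Type*} [MeasurableSpace Ω] (μ : Measure Ω) [IsProbabilityMeasure μ]
    (ξ : Ω → ℝ) (hmeas : Measurable ξ) (hpos : ∀ ω, 0 ≤ ξ ω)
    (a : ℝ) (ha : 1 < a)
    (hint : Integrable (fun ω => ξ ω ^ a) μ)
    (hmean : 0 < ∫ ω, ξ ω ∂μ) :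
    ∀ x : ℝ, 0 < x →
      (∫ ω, (ξ ω / (x + ξ ω)) ^ a ∂μ) / (∫ ω, ξ ω / (x + ξ ω) ∂μ) ^ a ≤
        (∫ ω, ξ ω ^ a ∂μ) / (∫ ω, ξ ω ∂μ) ^ a := by
  intro x hx
  have ha0 : (0:ℝ) < a := by linarith
  set η : Ω → ℝ := fun ω => ξ ω / (x + ξ ω) with hη_def
  have hxξ : ∀ ω, 0 < x + ξ ω := fun ω => by have := hpos ω; linarith
  have hηm : Measurable η := hmeas.div (measurable_const.add hmeas)
  have hη0 : ∀ ω, 0 ≤ η ω := fun ω => div_nonneg (hpos ω) (hxξ ω).le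
  have hη1 : ∀ ω, η ω ≤ 1 := fun ω => (div_le_one (hxξ ω)).2 (by linarith [hpos ω])
  -- integrability of ξ
  have hξint : Integrable ξ μ := by
    refine Integrable.mono' (hint.add (integrable_const 1)) hmeas.aestronglyMeasurable
      (ae_of_all _ fun ω => ?_)
    simp only [Pi.add_apply]
    rw [Real.norm_of_nonneg (hpos ω)]
    rcases le_total (ξ ω) 1 with h | h
    · have : (0:ℝ) ≤ ξ ω ^ a := Real.rpow_nonneg (hpos ω) a
      linarith
    · have h2 : ξ ω ^ (1:ℝ) ≤ ξ ω ^ a := Real.rpow_le_rpow_of_exponent_le h ha.le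
      rw [Real.rpow_one] at h2
      linarith
  -- bounded functions are integrable
  have hbdd_int : ∀ (c : ℝ), 0 ≤ c → Integrable (fun ω => η ω ^ c) μ := by
    intro c hc
    refine Integrable.mono' (integrable_const 1) (hηm.pow measurable_const).aestronglyMeasurable
      (ae_of_all _ fun ω => ?_)
    rw [Real.norm_of_nonneg (Real.rpow_nonneg (hη0 ω) c)]
    exact Real.rpow_le_one (hη0 ω) (hη1 ω) hc
  have hηint : Integrable η μ := by
    refine Integrable.mono' (integrable_const 1) hηm.aestronglyMeasurable
      (ae_of_all _ fun ω => ?_)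
    rw [Real.norm_of_nonneg (hη0 ω)]; exact hη1 ω
  have hηaint : Integrable (fun ω => η ω ^ a) μ := hbdd_int a ha0.le
  have hfξint : Integrable (fun ω => η ω ^ (a-1) * ξ ω) μ := by
    refine Integrable.mono hξint ((hηm.pow measurable_const).mul hmeas).aestronglyMeasurable
      (ae_of_all _ fun ω => ?_)
    rw [Real.norm_of_nonneg (mul_nonneg (Real.rpow_nonneg (hη0 ω) _) (hpos ω)),
      Real.norm_of_nonneg (hpos ω)]
    nth_rewrite 2 [← one_mul (ξ ω)]
    exact mul_le_mul_of_nonneg_right (Real.rpow_le_one (hη0 ω) (hη1 ω) (by linarith)) (hpos ω)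
  -- Chebyshev step
  have cheb : (∫ ω, ξ ω ∂μ) * (∫ ω, η ω ^ a ∂μ)
      ≤ (∫ ω, η ω ^ (a-1) * ξ ω ∂μ) * (∫ ω, η ω ∂μ) := by
    have hF0 : ∀ p : Ω × Ω, 0 ≤ (η p.1 ^ (a-1) * ξ p.1) * η p.2
        + η p.1 * (η p.2 ^ (a-1) * ξ p.2) - η p.1 ^ a * ξ p.2 - η p.2 ^ a * ξ p.1 :=
      fun p => aux_pt hx (hpos p.1) (hpos p.2) ha
    have i1 : Integrable (fun p : Ω × Ω => (η p.1 ^ (a-1) * ξ p.1) * η p.2) (μ.prod μ) :=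
      hfξint.mul_prod hηint
    have i2 : Integrable (fun p : Ω × Ω => η p.1 * (η p.2 ^ (a-1) * ξ p.2)) (μ.prod μ) :=
      hηint.mul_prod hfξint
    have i3 : Integrable (fun p : Ω × Ω => η p.1 ^ a * ξ p.2) (μ.prod μ) :=
      hηaint.mul_prod hξint
    have i4 : Integrable (fun p : Ω × Ω => η p.2 ^ a * ξ p.1) (μ.prod μ) := by
      have := hξint.mul_prod hηaint
      simpa [mul_comm] using this
    have hnn : 0 ≤ ∫ p, ((η p.1 ^ (a-1) * ξ p.1) * η p.2
        + η p.1 * (η p.2 ^ (a-1) * ξ p.2) - η p.1 ^ a * ξ p.2 - η p.2 ^ a * ξ p.1) ∂(μ.prod μ) :=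
      integral_nonneg hF0
    have i12 : Integrable (fun p : Ω × Ω => (η p.1 ^ (a-1) * ξ p.1) * η p.2
        + η p.1 * (η p.2 ^ (a-1) * ξ p.2)) (μ.prod μ) := by exact i1.add i2
    have i123 : Integrable (fun p : Ω × Ω => (η p.1 ^ (a-1) * ξ p.1) * η p.2
        + η p.1 * (η p.2 ^ (a-1) * ξ p.2) - η p.1 ^ a * ξ p.2) (μ.prod μ) := by exact i12.sub i3
    rw [integral_sub i123 i4, integral_sub i12 i3, integral_add i1 i2] at hnn
    rw [integral_prod_mul (fun ω => η ω ^ (a-1) * ξ ω) η,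
      integral_prod_mul η (fun ω => η ω ^ (a-1) * ξ ω),
      integral_prod_mul (fun ω => η ω ^ a) ξ] at hnn
    have : ∫ p : Ω × Ω, η p.2 ^ a * ξ p.1 ∂(μ.prod μ)
        = (∫ ω, ξ ω ∂μ) * (∫ ω, η ω ^ a ∂μ) := by
      rw [← integral_prod_mul ξ (fun ω => η ω ^ a)]
      simp [mul_comm]
    rw [this] at hnn
    linarith
  -- Hölder step
  have hconj : Real.HolderConjugate a (a / (a-1)) :=
    (Real.holderConjugate_iff_eq_conjExponent ha).2 rfl
  have hmemξ : MemLp ξ (ENNReal.ofReal a) μ := by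
    have hne0 : ENNReal.ofReal a ≠ 0 := by
      simp [ENNReal.ofReal_eq_zero, not_le, ha0]
    have hnetop : ENNReal.ofReal a ≠ ⊤ := ENNReal.ofReal_ne_top
    rw [← memLp_norm_rpow_iff hmeas.aestronglyMeasurable hne0 hnetop]
    rw [ENNReal.div_self hne0 hnetop, memLp_one_iff_integrable]
    refine hint.congr (ae_of_all _ fun ω => ?_)
    simp only [ENNReal.toReal_ofReal ha0.le, Real.norm_of_nonneg (hpos ω)]
  have hmemg : MemLp (fun ω => η ω ^ (a-1)) (ENNReal.ofReal (a/(a-1))) μ := by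
    refine memLp_of_bounded (a := 0) (b := 1) (ae_of_all _ fun ω => ?_)
      (hηm.pow measurable_const).aestronglyMeasurable _
    exact ⟨Real.rpow_nonneg (hη0 ω) _, Real.rpow_le_one (hη0 ω) (hη1 ω) (by linarith)⟩
  have holder : (∫ ω, η ω ^ (a-1) * ξ ω ∂μ)
      ≤ (∫ ω, ξ ω ^ a ∂μ) ^ (1/a) * (∫ ω, η ω ^ a ∂μ) ^ ((a-1)/a) := by
    have h := integral_mul_le_Lp_mul_Lq_of_nonneg hconj
      (ae_of_all _ hpos) (ae_of_all _ fun ω => Real.rpow_nonneg (hη0 ω) (a-1)) hmemξ hmemg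
    have e2 : ∀ ω, (η ω ^ (a-1)) ^ (a/(a-1)) = η ω ^ a := by
      intro ω
      rw [← Real.rpow_mul (hη0 ω)]
      congr 1
      rw [mul_div_assoc']
      rw [mul_comm, mul_div_assoc, div_self (by linarith : a - 1 ≠ 0), mul_one]
    simp only [e2] at h
    have e3 : 1 / (a / (a-1)) = (a-1)/a := by
      rw [one_div_div]
    rw [e3] at h
    calc (∫ ω, η ω ^ (a-1) * ξ ω ∂μ) = ∫ ω, ξ ω * η ω ^ (a-1) ∂μ := by
          simp only [mul_comm]
      _ ≤ _ := h
  -- positivity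
  have hI2 : 0 < ∫ ω, η ω ∂μ := by
    rcases (integral_nonneg (f := η) hη0).lt_or_eq with h | h
    · exact h
    · exfalso
      have hzero : η =ᵐ[μ] 0 :=
        (integral_eq_zero_iff_of_nonneg (f := η) hη0 hηint).1 h.symm
      have hξzero : ξ =ᵐ[μ] 0 := by
        filter_upwards [hzero] with ω hω
        have : ξ ω / (x + ξ ω) = 0 := hω
        rcases div_eq_zero_iff.1 this with h2 | h2
        · exact h2
        · exact absurd h2 (ne_of_gt (hxξ ω))
      rw [integral_congr_ae hξzero] at hmean
      simp at hmean
  have hI1 : 0 < ∫ ω, η ω ^ a ∂μ := by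
    rcases (integral_nonneg (f := fun ω => η ω ^ a) fun ω => Real.rpow_nonneg (hη0 ω) a).lt_or_eq with h | h
    · exact h
    · exfalso
      have hzero : (fun ω => η ω ^ a) =ᵐ[μ] 0 :=
        (integral_eq_zero_iff_of_nonneg (f := fun ω => η ω ^ a) (fun ω => Real.rpow_nonneg (hη0 ω) a) hηaint).1 h.symm
      have hξzero : ξ =ᵐ[μ] 0 := by
        filter_upwards [hzero] with ω hω
        have h1 : η ω ^ a = 0 := hω
        have h2 : η ω = 0 :=
          ((Real.rpow_eq_zero_iff_of_nonneg (hη0 ω)).1 h1).1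
        rcases div_eq_zero_iff.1 h2 with h3 | h3
        · exact h3
        · exact absurd h3 (ne_of_gt (hxξ ω))
      rw [integral_congr_ae hξzero] at hmean
      simp at hmean
  have hJ1 : 0 ≤ ∫ ω, ξ ω ^ a ∂μ :=
    integral_nonneg fun ω => Real.rpow_nonneg (hpos ω) a
  -- combine
  set I1 := ∫ ω, η ω ^ a ∂μ
  set I2 := ∫ ω, η ω ∂μ
  set J1 := ∫ ω, ξ ω ^ a ∂μ
  set J2 := ∫ ω, ξ ω ∂μ
  have step1 : J2 * I1 ≤ J1 ^ (1/a) * I1 ^ ((a-1)/a) * I2 :=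
    le_trans cheb (mul_le_mul_of_nonneg_right holder hI2.le)
  have hsplit : I1 = I1 ^ (1/a) * I1 ^ ((a-1)/a) := by
    rw [← Real.rpow_add hI1]
    rw [show 1/a + (a-1)/a = 1 by field_simp; ring, Real.rpow_one]
  have step2 : J2 * I1 ^ (1/a) ≤ J1 ^ (1/a) * I2 := by
    have hpow : 0 < I1 ^ ((a-1)/a) := Real.rpow_pos_of_pos hI1 _
    rw [← mul_le_mul_iff_of_pos_right hpow]
    calc J2 * I1 ^ (1/a) * I1 ^ ((a-1)/a) = J2 * I1 := by rw [mul_assoc, ← hsplit]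
      _ ≤ J1 ^ (1/a) * I1 ^ ((a-1)/a) * I2 := step1
      _ = J1 ^ (1/a) * I2 * I1 ^ ((a-1)/a) := by ring
  have step3 : J2 ^ a * I1 ≤ J1 * I2 ^ a := by
    have h1 : (J2 * I1 ^ (1/a)) ^ a ≤ (J1 ^ (1/a) * I2) ^ a :=
      Real.rpow_le_rpow (mul_nonneg hmean.le (Real.rpow_nonneg hI1.le _)) step2 ha0.le
    rw [Real.mul_rpow hmean.le (Real.rpow_nonneg hI1.le _),
      Real.mul_rpow (Real.rpow_nonneg hJ1 _) hI2.le,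
      ← Real.rpow_mul hI1.le, ← Real.rpow_mul hJ1,
      one_div_mul_cancel (ne_of_gt ha0), Real.rpow_one, Real.rpow_one] at h1
    exact h1
  rw [div_le_div_iff₀ (Real.rpow_pos_of_pos hI2 a) (Real.rpow_pos_of_pos hmean a)]
  calc I1 * J2 ^ a = J2 ^ a * I1 := by ring
    _ ≤ J1 * I2 ^ a := step3
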